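/- If (U, R, 𝓕) is an L-approximation space, then (𝔠(U, R, 𝓕), ⊆) is an L-domain. -/

import Mathlib

open Set

/-- The upper approximation operator: `upp R A = {x | ∃ y ∈ A, x R y}`. -/
def upp {U : Type*} (R : U → U → Prop) (A : Set U) : Set U := {x | ∃ y ∈ A, R x y}

/-- `(U, R, 𝓕)` is a CF-approximation space. -/
def IsCFApprox {U : Type*} (R : U → U → Prop) (𝓕 : Set (Set U)) : Prop :=
  Transitive R ∧ 𝓕.Nonempty ∧ (∀ F ∈ 𝓕, F.Finite) ∧
    ∀ F ∈ 𝓕, ∀ K : Set U, K.Finite → K ⊆ upp R F →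
      ∃ G ∈ 𝓕, K ⊆ upp R G ∧ G ⊆ upp R F

/-- `E` is a CF-closed set of `(U, R, 𝓕)`. -/
def CFClosed {U : Type*} (R : U → U → Prop) (𝓕 : Set (Set U)) (E : Set U) : Prop :=
  ∀ K : Set U, K.Finite → K ⊆ E →
    ∃ F ∈ 𝓕, K ⊆ upp R F ∧ upp R F ⊆ E ∧ F ⊆ E

/-- The join saturation `𝓕^♯`: all unions of nonempty finite subfamilies of `𝓕`. -/
def joinSat {U : Type*} (𝓕 : Set (Set U)) : Set (Set U) :=
  {A | ∃ 𝓐 : Set (Set U), 𝓐 ⊆ 𝓕 ∧ 𝓐.Finite ∧ 𝓐.Nonempty ∧ A = ⋃₀ 𝓐}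

/-- `S(M, F)`: the set of `G ∈ 𝓕` satisfying (sL-1) and (sL-2). -/
def SFam {U : Type*} (R : U → U → Prop) (𝓕 : Set (Set U)) (M F : Set U) : Set (Set U) :=
  {G | G ∈ 𝓕 ∧ upp R M ⊆ upp R G ∧ upp R G ⊆ upp R F ∧
    ∀ G' ∈ 𝓕, upp R M ⊆ upp R G' → upp R G' ⊆ upp R F → upp R G ⊆ upp R G'}

/-- `S*(M, F) = {G ∈ S(M, F) | G ⊆ upp R F}`. -/
def SStar {U : Type*} (R : U → U → Prop) (𝓕 : Set (Set U)) (M F : Set U) : Set (Set U) :=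
  {G | G ∈ SFam R 𝓕 M F ∧ G ⊆ upp R F}

/-- sL-approximation space. -/
def IsSLApprox {U : Type*} (R : U → U → Prop) (𝓕 : Set (Set U)) : Prop :=
  IsCFApprox R 𝓕 ∧
    ∀ M ∈ joinSat 𝓕, ∀ F ∈ 𝓕, M ⊆ upp R F → (SFam R 𝓕 M F).Nonempty

/-- L-approximation space. -/
def IsLApprox {U : Type*} (R : U → U → Prop) (𝓕 : Set (Set U)) : Prop :=
  IsCFApprox R 𝓕 ∧
    ∀ M ∈ joinSat 𝓕 ∪ {(∅ : Set U)}, ∀ F ∈ 𝓕, M ⊆ upp R F → (SFam R 𝓕 M F).Nonempty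

/-- bc-approximation space. -/
def IsBCApprox {U : Type*} (R : U → U → Prop) (𝓕 : Set (Set U)) : Prop :=
  IsCFApprox R 𝓕 ∧
    ∀ M ∈ joinSat 𝓕 ∪ {(∅ : Set U)}, ∀ F ∈ 𝓕, M ⊆ upp R F →
      ∃ G ∈ 𝓕, upp R M ⊆ upp R G ∧ upp R G ⊆ upp R F ∧
        ∀ G' ∈ 𝓕, upp R M ⊆ upp R G' → upp R G ⊆ upp R G'

/-- A dcpo: every (nonempty) directed subset has a supremum. -/
def IsDcpo (P : Type*) [PartialOrder P] : Prop :=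
  ∀ D : Set P, D.Nonempty → DirectedOn (· ≤ ·) D → ∃ s, IsLUB D s

/-- The way-below relation `x ≪ y`. -/
def WayBelow {P : Type*} [PartialOrder P] (x y : P) : Prop :=
  ∀ D : Set P, D.Nonempty → DirectedOn (· ≤ ·) D →
    ∀ s, IsLUB D s → y ≤ s → ∃ d ∈ D, x ≤ d

/-- Continuous domain: a dcpo in which for every `x` the set `{z | z ≪ x}` is
directed with supremum `x`. -/
def IsContinuousDomain (P : Type*) [PartialOrder P] : Prop :=
  IsDcpo P ∧ ∀ x : P, {z | WayBelow z x}.Nonempty ∧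
    DirectedOn (· ≤ ·) {z | WayBelow z x} ∧ IsLUB {z | WayBelow z x} x

/-- Algebraic domain: a dcpo in which for every `x` the set `↓x ∩ K(P)` is
directed with supremum `x`. -/
def IsAlgebraicDomain (P : Type*) [PartialOrder P] : Prop :=
  IsDcpo P ∧ ∀ x : P, ({k | k ≤ x ∧ WayBelow k k}).Nonempty ∧
    DirectedOn (· ≤ ·) {k | k ≤ x ∧ WayBelow k k} ∧
    IsLUB {k | k ≤ x ∧ WayBelow k k} x

/-- sL-domain: a continuous domain in which every principal ideal is a
sup-semilattice. -/
def IsSLDomain (P : Type*) [PartialOrder P] : Prop :=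
  IsContinuousDomain P ∧ ∀ x a b : P, a ≤ x → b ≤ x →
    ∃ s, s ≤ x ∧ a ≤ s ∧ b ≤ s ∧ ∀ t, t ≤ x → a ≤ t → b ≤ t → s ≤ t

/-- L-domain: a continuous domain in which every principal ideal is a
complete lattice (every subset of `↓x` has a least upper bound in `↓x`). -/
def IsLDomain (P : Type*) [PartialOrder P] : Prop :=
  IsContinuousDomain P ∧ ∀ (x : P) (A : Set P), (∀ a ∈ A, a ≤ x) →
    ∃ s, s ≤ x ∧ (∀ a ∈ A, a ≤ s) ∧ ∀ t, t ≤ x → (∀ a ∈ A, a ≤ t) → s ≤ t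

/-- bc-domain: a continuous domain in which every up-bounded subset has a
supremum. -/
def IsBCDomain (P : Type*) [PartialOrder P] : Prop :=
  IsContinuousDomain P ∧ ∀ A : Set P, (∃ b, ∀ a ∈ A, a ≤ b) → ∃ s, IsLUB A s
section Auxiliary

variable {U : Type*} {R : U → U → Prop} {𝓕 : Set (Set U)}

lemma upp_mono {A B : Set U} (h : A ⊆ B) : upp R A ⊆ upp R B := by
  rintro x ⟨y, hy, hxy⟩; exact ⟨y, h hy, hxy⟩

lemma upp_trans (hR : Transitive R) {A B : Set U} (h : A ⊆ upp R B) :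
    upp R A ⊆ upp R B := by
  rintro x ⟨y, hy, hxy⟩
  obtain ⟨z, hz, hyz⟩ := h hy
  exact ⟨z, hz, hR hxy hyz⟩

lemma upp_empty : upp R (∅ : Set U) = ∅ := by
  ext x; simp [upp]

/-- Basis predicate: `F` is a basis element of the CF-closed set `E`. -/
def Bas (R : U → U → Prop) (𝓕 : Set (Set U)) (E F : Set U) : Prop :=
  F ∈ 𝓕 ∧ F ⊆ E ∧ upp R F ⊆ E

lemma bas_exists {E : Set U} (hE : CFClosed R 𝓕 E) {K : Set U} (hKf : K.Finite)
    (hKE : K ⊆ E) : ∃ F, Bas R 𝓕 E F ∧ K ⊆ upp R F := by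
  obtain ⟨F, hF, h1, h2, h3⟩ := hE K hKf hKE
  exact ⟨F, ⟨hF, h3, h2⟩, h1⟩

lemma cfclosed_upp (hCF : IsCFApprox R 𝓕) {F : Set U} (hF : F ∈ 𝓕) :
    CFClosed R 𝓕 (upp R F) := by
  intro K hKf hK
  obtain ⟨G, hG, h1, h2⟩ := hCF.2.2.2 F hF K hKf hK
  exact ⟨G, hG, h1, upp_trans hCF.1 h2, h2⟩

lemma finite_subset_directed {D : Set (Set U)} (hne : D.Nonempty)
    (hdir : DirectedOn (· ⊆ ·) D) {K : Set U} (hKf : K.Finite) :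
    K ⊆ ⋃₀ D → ∃ E ∈ D, K ⊆ E := by
  refine Set.Finite.induction_on (motive := fun s _ => s ⊆ ⋃₀ D → ∃ E ∈ D, s ⊆ E) K hKf
    (fun _ => ⟨hne.choose, hne.choose_spec, empty_subset _⟩) ?_
  intro a s hns hsf ih h
  obtain ⟨E, hE, hsE⟩ := ih fun x hx => h (Set.mem_insert_of_mem _ hx)
  obtain ⟨E', hE', haE'⟩ := h (Set.mem_insert _ _)
  obtain ⟨E'', hE'', h1, h2⟩ := hdir E hE E' hE'
  exact ⟨E'', hE'', Set.insert_subset (h2 haE') (hsE.trans h1)⟩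

lemma cfclosed_sUnion {D : Set (Set U)} (hne : D.Nonempty)
    (hdir : DirectedOn (· ⊆ ·) D) (hD : ∀ E ∈ D, CFClosed R 𝓕 E) :
    CFClosed R 𝓕 (⋃₀ D) := by
  intro K hKf hK
  obtain ⟨E, hE, hKE⟩ := finite_subset_directed hne hdir hKf hK
  obtain ⟨F, hF, h1, h2, h3⟩ := hD E hE K hKf hKE
  exact ⟨F, hF, h1, h2.trans (subset_sUnion_of_mem hE),
    h3.trans (subset_sUnion_of_mem hE)⟩

/-! ### The dcpo structure -/

lemma cf_dcpo (hCF : IsCFApprox R 𝓕) : IsDcpo {E : Set U // CFClosed R 𝓕 E} := by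
  intro D hne hdir
  have hdir' : DirectedOn (· ⊆ ·) (Subtype.val '' D) := by
    rintro _ ⟨d, hd, rfl⟩ _ ⟨e, he, rfl⟩
    obtain ⟨f, hf, h1, h2⟩ := hdir d hd e he
    exact ⟨f.val, ⟨f, hf, rfl⟩, h1, h2⟩
  have hcl : CFClosed R 𝓕 (⋃₀ (Subtype.val '' D)) :=
    cfclosed_sUnion (hne.image _) hdir' (by rintro _ ⟨d, _, rfl⟩; exact d.2)
  refine ⟨⟨_, hcl⟩, fun d hd => ?_, fun t ht => ?_⟩
  · exact subset_sUnion_of_mem ⟨d, hd, rfl⟩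
  · show ⋃₀ (Subtype.val '' D) ⊆ t.val
    apply Set.sUnion_subset
    rintro _ ⟨d, hd, rfl⟩
    exact ht hd

lemma lub_val (hCF : IsCFApprox R 𝓕) {D : Set {E : Set U // CFClosed R 𝓕 E}}
    (hne : D.Nonempty) (hdir : DirectedOn (· ≤ ·) D)
    {s : {E : Set U // CFClosed R 𝓕 E}} (hs : IsLUB D s) :
    s.val = ⋃₀ (Subtype.val '' D) := by
  have hdir' : DirectedOn (· ⊆ ·) (Subtype.val '' D) := by
    rintro _ ⟨d, hd, rfl⟩ _ ⟨e, he, rfl⟩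
    obtain ⟨f, hf, h1, h2⟩ := hdir d hd e he
    exact ⟨f.val, ⟨f, hf, rfl⟩, h1, h2⟩
  have hcl : CFClosed R 𝓕 (⋃₀ (Subtype.val '' D)) :=
    cfclosed_sUnion (hne.image _) hdir' (by rintro _ ⟨d, _, rfl⟩; exact d.2)
  have hs' : IsLUB D ⟨_, hcl⟩ := by
    refine ⟨fun d hd => ?_, fun t ht => ?_⟩
    · exact subset_sUnion_of_mem ⟨d, hd, rfl⟩
    · show ⋃₀ (Subtype.val '' D) ⊆ t.val
      apply Set.sUnion_subset
      rintro _ ⟨d, hd, rfl⟩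
      exact ht hd
  rw [hs.unique hs']

/-! ### Way-below and continuity -/

lemma wayBelow_bas (hCF : IsCFApprox R 𝓕) {E F : Set U} (hE : CFClosed R 𝓕 E)
    (hF : Bas R 𝓕 E F) :
    WayBelow (⟨upp R F, cfclosed_upp hCF hF.1⟩ : {E : Set U // CFClosed R 𝓕 E})
      ⟨E, hE⟩ := by
  intro D hne hdir s hs hEs
  have hval := lub_val hCF hne hdir hs
  have hdir' : DirectedOn (· ⊆ ·) (Subtype.val '' D) := by
    rintro _ ⟨d, hd, rfl⟩ _ ⟨e, he, rfl⟩
    obtain ⟨f, hf, h1, h2⟩ := hdir d hd e he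
    exact ⟨f.val, ⟨f, hf, rfl⟩, h1, h2⟩
  have hFD : F ⊆ ⋃₀ (Subtype.val '' D) := by
    rw [← hval]; exact fun x hx => hEs (hF.2.1 hx)
  obtain ⟨_, ⟨d, hd, rfl⟩, hFd⟩ :=
    finite_subset_directed (hne.image _) hdir' (hCF.2.2.1 F hF.1) hFD
  obtain ⟨H, hH, hFH⟩ := bas_exists d.2 (hCF.2.2.1 F hF.1) hFd
  refine ⟨d, hd, ?_⟩
  show upp R F ⊆ d.val
  exact (upp_trans hCF.1 hFH).trans hH.2.2

lemma cf_continuous (hCF : IsCFApprox R 𝓕) :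
    IsContinuousDomain {E : Set U // CFClosed R 𝓕 E} := by
  refine ⟨cf_dcpo hCF, ?_⟩
  rintro ⟨E, hE⟩
  set P := {E : Set U // CFClosed R 𝓕 E}
  set BE : Set P := {z | ∃ F, Bas R 𝓕 E F ∧ z.val = upp R F} with hBEdef
  have hBEne : BE.Nonempty := by
    obtain ⟨F, hF, -⟩ := bas_exists hE Set.finite_empty (empty_subset E)
    exact ⟨⟨upp R F, cfclosed_upp hCF hF.1⟩, F, hF, rfl⟩
  have hBEdir : DirectedOn (· ≤ ·) BE := by
    rintro z1 ⟨F1, hF1, hz1⟩ z2 ⟨F2, hF2, hz2⟩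
    obtain ⟨F, hF, hsub⟩ := bas_exists hE
      ((hCF.2.2.1 F1 hF1.1).union (hCF.2.2.1 F2 hF2.1))
      (Set.union_subset hF1.2.1 hF2.2.1)
    refine ⟨⟨upp R F, cfclosed_upp hCF hF.1⟩, ⟨F, hF, rfl⟩, ?_, ?_⟩
    · show z1.val ⊆ upp R F
      rw [hz1]
      exact upp_trans hCF.1 fun x hx => hsub (Or.inl hx)
    · show z2.val ⊆ upp R F
      rw [hz2]
      exact upp_trans hCF.1 fun x hx => hsub (Or.inr hx)
  have hBElub : IsLUB BE ⟨E, hE⟩ := by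
    refine ⟨?_, ?_⟩
    · rintro z ⟨F, hF, hz⟩
      show z.val ⊆ E
      rw [hz]; exact hF.2.2
    · intro t ht
      show E ⊆ t.val
      intro x hx
      obtain ⟨F, hF, hxF⟩ := bas_exists hE (Set.finite_singleton x)
        (Set.singleton_subset_iff.2 hx)
      have : (⟨upp R F, cfclosed_upp hCF hF.1⟩ : P) ≤ t :=
        ht ⟨F, hF, rfl⟩
      exact this (hxF rfl)
  have hBEwb : ∀ z ∈ BE, WayBelow z (⟨E, hE⟩ : P) := by
    rintro z ⟨F, hF, hz⟩
    have := wayBelow_bas hCF hE hF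
    rwa [show (⟨upp R F, cfclosed_upp hCF hF.1⟩ : P) = z from (Subtype.ext hz).symm] at this
  have key : ∀ z : P, WayBelow z ⟨E, hE⟩ → ∃ w ∈ BE, z ≤ w := by
    intro z hz
    obtain ⟨d, hd, hzd⟩ := hz BE hBEne hBEdir ⟨E, hE⟩ hBElub le_rfl
    exact ⟨d, hd, hzd⟩
  refine ⟨?_, ?_, ?_, ?_⟩
  · obtain ⟨w, hw⟩ := hBEne
    exact ⟨w, hBEwb w hw⟩
  · intro z1 hz1 z2 hz2
    obtain ⟨w1, hw1, hzw1⟩ := key z1 hz1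
    obtain ⟨w2, hw2, hzw2⟩ := key z2 hz2
    obtain ⟨w, hw, h1, h2⟩ := hBEdir w1 hw1 w2 hw2
    exact ⟨w, hBEwb w hw, hzw1.trans h1, hzw2.trans h2⟩
  · rintro z hz
    obtain ⟨d, hd, hzd⟩ := hz {⟨E, hE⟩} (Set.singleton_nonempty _)
      (directedOn_singleton _) ⟨E, hE⟩ isLUB_singleton le_rfl
    rw [Set.mem_singleton_iff] at hd
    exact hd ▸ hzd
  · intro t ht
    refine le_trans (le_of_eq rfl) (hBElub.2 ?_)
    intro w hw
    exact ht (hBEwb w hw)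

end Auxiliary
section LPart

variable {U : Type*} {R : U → U → Prop} {𝓕 : Set (Set U)}

lemma join_mem {F1 F2 : Set U} (h1 : F1 ∈ 𝓕) (h2 : F2 ∈ 𝓕) :
    F1 ∪ F2 ∈ joinSat 𝓕 ∪ {(∅ : Set U)} :=
  Or.inl ⟨{F1, F2}, by rintro x (rfl | rfl) <;> assumption,
    Set.Finite.insert F1 (Set.finite_singleton F2),
    ⟨F1, Or.inl rfl⟩, (Set.sUnion_pair F1 F2).symm⟩

/-- Well-definedness: the `upp`-image of a member of `S(M, F)` does not depend on the
chosen basis element `F` of `X`. -/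
lemma sfam_wd (hL : IsLApprox R 𝓕) {X M F F' G G' : Set U} (hX : CFClosed R 𝓕 X)
    (hM : M ∈ joinSat 𝓕 ∪ {(∅ : Set U)})
    (hF : Bas R 𝓕 X F) (hF' : Bas R 𝓕 X F')
    (hMF : M ⊆ upp R F) (hMF' : M ⊆ upp R F')
    (hG : G ∈ SFam R 𝓕 M F) (hG' : G' ∈ SFam R 𝓕 M F') :
    upp R G = upp R G' := by
  have hR := hL.1.1
  have hfin := hL.1.2.2.1
  obtain ⟨F'', hF'', hsub⟩ := bas_exists hX ((hfin F hF.1).union (hfin F' hF'.1))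
    (Set.union_subset hF.2.1 hF'.2.1)
  have hFF : upp R F ⊆ upp R F'' := upp_trans hR fun x hx => hsub (Or.inl hx)
  have hFF' : upp R F' ⊆ upp R F'' := upp_trans hR fun x hx => hsub (Or.inr hx)
  obtain ⟨G'', hG''⟩ := hL.2 M hM F'' hF''.1 (hMF.trans hFF)
  have e1 : upp R G = upp R G'' := by
    have h1 : upp R G'' ⊆ upp R G := hG''.2.2.2 G hG.1 hG.2.1 (hG.2.2.1.trans hFF)
    have h2 : upp R G ⊆ upp R G'' := hG.2.2.2 G'' hG''.1 hG''.2.1 (h1.trans hG.2.2.1)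
    exact h2.antisymm h1
  have e2 : upp R G' = upp R G'' := by
    have h1 : upp R G'' ⊆ upp R G' := hG''.2.2.2 G' hG'.1 hG'.2.1 (hG'.2.2.1.trans hFF')
    have h2 : upp R G' ⊆ upp R G'' := hG'.2.2.2 G'' hG''.1 hG''.2.1 (h1.trans hG'.2.2.1)
    exact h2.antisymm h1
  rw [e1, e2]

/-- Comparison against a witness produced by a closed subset of `X`. -/
lemma sfam_le_witness (hL : IsLApprox R 𝓕) {X M F G H : Set U} (hX : CFClosed R 𝓕 X)
    (hM : M ∈ joinSat 𝓕 ∪ {(∅ : Set U)})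
    (hF : Bas R 𝓕 X F) (hMF : M ⊆ upp R F) (hG : G ∈ SFam R 𝓕 M F)
    (hH : H ∈ 𝓕) (hHX : H ⊆ X) (hMH : upp R M ⊆ upp R H) :
    upp R G ⊆ upp R H := by
  have hR := hL.1.1
  have hfin := hL.1.2.2.1
  obtain ⟨F', hF', hsub⟩ := bas_exists hX ((hfin F hF.1).union (hfin H hH))
    (Set.union_subset hF.2.1 hHX)
  have hFF' : upp R F ⊆ upp R F' := upp_trans hR fun x hx => hsub (Or.inl hx)
  have hHF' : H ⊆ upp R F' := fun x hx => hsub (Or.inr hx)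
  obtain ⟨G', hG'⟩ := hL.2 M hM F' hF'.1 (hMF.trans hFF')
  have heq : upp R G = upp R G' := sfam_wd hL hX hM hF hF' hMF (hMF.trans hFF') hG hG'
  rw [heq]
  exact hG'.2.2.2 H hH hMH (upp_trans hR hHF')

/-- Monotonicity of the minimal `upp`-image in `M`. -/
lemma sfam_mono (hL : IsLApprox R 𝓕) {X M M' F F' G G' : Set U} (hX : CFClosed R 𝓕 X)
    (hM : M ∈ joinSat 𝓕 ∪ {(∅ : Set U)}) (hM' : M' ∈ joinSat 𝓕 ∪ {(∅ : Set U)})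
    (hMf : M.Finite) (hM'f : M'.Finite) (hMX : M ⊆ X) (hM'X : M' ⊆ X)
    (hMM' : upp R M ⊆ upp R M')
    (hF : Bas R 𝓕 X F) (hMF : M ⊆ upp R F) (hG : G ∈ SFam R 𝓕 M F)
    (hF' : Bas R 𝓕 X F') (hM'F' : M' ⊆ upp R F') (hG' : G' ∈ SFam R 𝓕 M' F') :
    upp R G ⊆ upp R G' := by
  have hR := hL.1.1
  have hfin := hL.1.2.2.1
  obtain ⟨F'', hF'', hsub⟩ := bas_exists hX ((hfin F hF.1).union (hfin F' hF'.1))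
    (Set.union_subset hF.2.1 hF'.2.1)
  have hFF : upp R F ⊆ upp R F'' := upp_trans hR fun x hx => hsub (Or.inl hx)
  have hFF' : upp R F' ⊆ upp R F'' := upp_trans hR fun x hx => hsub (Or.inr hx)
  obtain ⟨G₁, hG₁⟩ := hL.2 M hM F'' hF''.1 (hMF.trans hFF)
  obtain ⟨G₁', hG₁'⟩ := hL.2 M' hM' F'' hF''.1 (hM'F'.trans hFF')
  have e1 : upp R G = upp R G₁ :=
    sfam_wd hL hX hM hF hF'' hMF (hMF.trans hFF) hG hG₁
  have e2 : upp R G' = upp R G₁' :=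
    sfam_wd hL hX hM' hF' hF'' hM'F' (hM'F'.trans hFF') hG' hG₁'
  rw [e1, e2]
  exact hG₁.2.2.2 G₁' hG₁'.1 (hMM'.trans hG₁'.2.1) hG₁'.2.2.1

/-- The least element of `↓X`. -/
lemma local_bot (hL : IsLApprox R 𝓕) {X : Set U} (hX : CFClosed R 𝓕 X) :
    ∃ m, CFClosed R 𝓕 m ∧ m ⊆ X ∧ ∀ t, CFClosed R 𝓕 t → t ⊆ X → m ⊆ t := by
  have hCF := hL.1
  obtain ⟨F0, hF0, -⟩ := bas_exists hX Set.finite_empty (Set.empty_subset X)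
  obtain ⟨G0, hG0⟩ := hL.2 ∅ (Or.inr rfl) F0 hF0.1 (Set.empty_subset _)
  refine ⟨upp R G0, cfclosed_upp hCF hG0.1, hG0.2.2.1.trans hF0.2.2, ?_⟩
  intro t ht htX
  obtain ⟨H, hH, -⟩ := bas_exists ht Set.finite_empty (Set.empty_subset t)
  have : upp R G0 ⊆ upp R H :=
    sfam_le_witness hL hX (Or.inr rfl) hF0 (Set.empty_subset _) hG0 hH.1
      (hH.2.1.trans htX) (by rw [upp_empty]; exact Set.empty_subset _)
  exact this.trans hH.2.2

/-- Binary suprema in `↓X`. -/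
lemma local_sup (hL : IsLApprox R 𝓕) {X a b : Set U} (hX : CFClosed R 𝓕 X)
    (ha : CFClosed R 𝓕 a) (hb : CFClosed R 𝓕 b) (haX : a ⊆ X) (hbX : b ⊆ X) :
    ∃ s, CFClosed R 𝓕 s ∧ s ⊆ X ∧ a ⊆ s ∧ b ⊆ s ∧
      ∀ t, CFClosed R 𝓕 t → t ⊆ X → a ⊆ t → b ⊆ t → s ⊆ t := by
  have hCF := hL.1
  have hR := hCF.1
  have hfin := hCF.2.2.1
  classical
  set GS : Set (Set U) := {g | ∃ F1 F2 F G, Bas R 𝓕 a F1 ∧ Bas R 𝓕 b F2 ∧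
    Bas R 𝓕 X F ∧ F1 ∪ F2 ⊆ upp R F ∧ G ∈ SFam R 𝓕 (F1 ∪ F2) F ∧ g = upp R G}
    with hGSdef
  -- helper to produce elements of GS
  have hmk : ∀ F1 F2, Bas R 𝓕 a F1 → Bas R 𝓕 b F2 →
      ∃ F G, Bas R 𝓕 X F ∧ F1 ∪ F2 ⊆ upp R F ∧ G ∈ SFam R 𝓕 (F1 ∪ F2) F := by
    intro F1 F2 hF1 hF2
    obtain ⟨F, hF, hsub⟩ := bas_exists hX ((hfin F1 hF1.1).union (hfin F2 hF2.1))
      (Set.union_subset (hF1.2.1.trans haX) (hF2.2.1.trans hbX))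
    obtain ⟨G, hG⟩ := hL.2 (F1 ∪ F2) (join_mem hF1.1 hF2.1) F hF.1 hsub
    exact ⟨F, G, hF, hsub, hG⟩
  have hGSsubX : ∀ g ∈ GS, g ⊆ X := by
    rintro g ⟨F1, F2, F, G, hF1, hF2, hF, hsub, hG, rfl⟩
    exact hG.2.2.1.trans hF.2.2
  have hGScl : ∀ g ∈ GS, CFClosed R 𝓕 g := by
    rintro g ⟨F1, F2, F, G, hF1, hF2, hF, hsub, hG, rfl⟩
    exact cfclosed_upp hCF hG.1
  have hGSne : GS.Nonempty := by
    obtain ⟨F1, hF1, -⟩ := bas_exists ha Set.finite_empty (Set.empty_subset a)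
    obtain ⟨F2, hF2, -⟩ := bas_exists hb Set.finite_empty (Set.empty_subset b)
    obtain ⟨F, G, hF, hsub, hG⟩ := hmk F1 F2 hF1 hF2
    exact ⟨upp R G, F1, F2, F, G, hF1, hF2, hF, hsub, hG, rfl⟩
  have hGSdir : DirectedOn (· ⊆ ·) GS := by
    rintro g ⟨F1, F2, F, G, hF1, hF2, hF, hsub, hG, rfl⟩
      g' ⟨F1', F2', F', G', hF1', hF2', hF', hsub', hG', rfl⟩
    obtain ⟨F1'', hF1'', hs1⟩ := bas_exists ha ((hfin F1 hF1.1).union (hfin F1' hF1'.1))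
      (Set.union_subset hF1.2.1 hF1'.2.1)
    obtain ⟨F2'', hF2'', hs2⟩ := bas_exists hb ((hfin F2 hF2.1).union (hfin F2' hF2'.1))
      (Set.union_subset hF2.2.1 hF2'.2.1)
    obtain ⟨F'', G'', hF'', hsub'', hG''⟩ := hmk F1'' F2'' hF1'' hF2''
    have hMsub : ∀ {A B A' B' : Set U}, A ⊆ upp R A' → B ⊆ upp R B' →
        upp R (A ∪ B) ⊆ upp R (A' ∪ B') := by
      intro A B A' B' h1 h2
      apply upp_trans hR
      rintro x (hx | hx)
      · exact upp_mono Set.subset_union_left (h1 hx)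
      · exact upp_mono Set.subset_union_right (h2 hx)
    have hmono1 : upp R G ⊆ upp R G'' :=
      sfam_mono hL hX (join_mem hF1.1 hF2.1) (join_mem hF1''.1 hF2''.1)
        ((hfin F1 hF1.1).union (hfin F2 hF2.1))
        ((hfin F1'' hF1''.1).union (hfin F2'' hF2''.1))
        (Set.union_subset (hF1.2.1.trans haX) (hF2.2.1.trans hbX))
        (Set.union_subset (hF1''.2.1.trans haX) (hF2''.2.1.trans hbX))
        (hMsub (fun x hx => hs1 (Or.inl hx)) (fun x hx => hs2 (Or.inl hx)))
        hF hsub hG hF'' hsub'' hG''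
    have hmono2 : upp R G' ⊆ upp R G'' :=
      sfam_mono hL hX (join_mem hF1'.1 hF2'.1) (join_mem hF1''.1 hF2''.1)
        ((hfin F1' hF1'.1).union (hfin F2' hF2'.1))
        ((hfin F1'' hF1''.1).union (hfin F2'' hF2''.1))
        (Set.union_subset (hF1'.2.1.trans haX) (hF2'.2.1.trans hbX))
        (Set.union_subset (hF1''.2.1.trans haX) (hF2''.2.1.trans hbX))
        (hMsub (fun x hx => hs1 (Or.inr hx)) (fun x hx => hs2 (Or.inr hx)))
        hF' hsub' hG' hF'' hsub'' hG''
    exact ⟨upp R G'', ⟨F1'', F2'', F'', G'', hF1'', hF2'', hF'', hsub'', hG'', rfl⟩,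
      hmono1, hmono2⟩
  refine ⟨⋃₀ GS, cfclosed_sUnion hGSne hGSdir hGScl, Set.sUnion_subset hGSsubX, ?_, ?_, ?_⟩
  · -- a ⊆ ⋃₀ GS
    intro x hx
    obtain ⟨F1, hF1, hxF1⟩ := bas_exists ha (Set.finite_singleton x)
      (Set.singleton_subset_iff.2 hx)
    obtain ⟨F2, hF2, -⟩ := bas_exists hb Set.finite_empty (Set.empty_subset b)
    obtain ⟨F, G, hF, hsub, hG⟩ := hmk F1 F2 hF1 hF2
    refine ⟨upp R G, ⟨F1, F2, F, G, hF1, hF2, hF, hsub, hG, rfl⟩, ?_⟩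
    exact hG.2.1 (upp_mono Set.subset_union_left (hxF1 rfl))
  · -- b ⊆ ⋃₀ GS
    intro x hx
    obtain ⟨F1, hF1, -⟩ := bas_exists ha Set.finite_empty (Set.empty_subset a)
    obtain ⟨F2, hF2, hxF2⟩ := bas_exists hb (Set.finite_singleton x)
      (Set.singleton_subset_iff.2 hx)
    obtain ⟨F, G, hF, hsub, hG⟩ := hmk F1 F2 hF1 hF2
    refine ⟨upp R G, ⟨F1, F2, F, G, hF1, hF2, hF, hsub, hG, rfl⟩, ?_⟩
    exact hG.2.1 (upp_mono Set.subset_union_right (hxF2 rfl))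
  · -- leastness
    intro t ht htX hat hbt
    apply Set.sUnion_subset
    rintro g ⟨F1, F2, F, G, hF1, hF2, hF, hsub, hG, rfl⟩
    obtain ⟨H, hH, hMH⟩ := bas_exists ht ((hfin F1 hF1.1).union (hfin F2 hF2.1))
      (Set.union_subset (hF1.2.1.trans hat) (hF2.2.1.trans hbt))
    have : upp R G ⊆ upp R H :=
      sfam_le_witness hL hX (join_mem hF1.1 hF2.1) hF hsub hG hH.1
        (hH.2.1.trans htX) (upp_trans hR hMH)
    exact this.trans hH.2.2

/-- Abstract reduction: a dcpo with local bottoms and local binary sups has all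
local sups. -/
lemma local_complete {P : Type*} [PartialOrder P] (hd : IsDcpo P)
    (hbot : ∀ x : P, ∃ m, m ≤ x ∧ ∀ t, t ≤ x → m ≤ t)
    (hbin : ∀ x a b : P, a ≤ x → b ≤ x →
      ∃ s, s ≤ x ∧ a ≤ s ∧ b ≤ s ∧ ∀ t, t ≤ x → a ≤ t → b ≤ t → s ≤ t) :
    ∀ (x : P) (A : Set P), (∀ a ∈ A, a ≤ x) →
      ∃ s, s ≤ x ∧ (∀ a ∈ A, a ≤ s) ∧ ∀ t, t ≤ x → (∀ a ∈ A, a ≤ t) → s ≤ t := by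
  classical
  intro x A hA
  rcases A.eq_empty_or_nonempty with rfl | hAne
  · obtain ⟨m, hm1, hm2⟩ := hbot x
    exact ⟨m, hm1, by simp, fun t ht _ => hm2 t ht⟩
  have hfin : ∀ K : Finset P, (↑K : Set P) ⊆ A → K.Nonempty →
      ∃ s, s ≤ x ∧ (∀ a ∈ K, a ≤ s) ∧ ∀ t, t ≤ x → (∀ a ∈ K, a ≤ t) → s ≤ t := by
    intro K
    induction K using Finset.induction_on with
    | empty => intro _ h; exact absurd h (by simp)
    | insert c K hc ih =>
      intro hKA _
      have hcA : c ∈ A := hKA (by simp)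
      rcases K.eq_empty_or_nonempty with rfl | hKne
      · refine ⟨c, hA c hcA, ?_, fun t _ hbd => hbd c (by simp)⟩
        intro a haK
        simp only [Finset.mem_insert, Finset.notMem_empty, or_false] at haK
        exact le_of_eq (congrArg id haK)
      · obtain ⟨s, hs1, hs2, hs3⟩ := ih
          (fun y hy => hKA (Finset.mem_coe.2 (Finset.mem_insert_of_mem (Finset.mem_coe.1 hy))))
          hKne
        obtain ⟨u, hu1, hu2, hu3, hu4⟩ := hbin x c s (hA c hcA) hs1
        refine ⟨u, hu1, ?_, ?_⟩
        · intro a ha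
          rcases Finset.mem_insert.1 ha with rfl | ha
          · exact hu2
          · exact (hs2 a ha).trans hu3
        · intro t ht hbd
          exact hu4 t ht (hbd c (Finset.mem_insert_self _ _))
            (hs3 t ht fun a ha => hbd a (Finset.mem_insert_of_mem ha))
  set D : Set P := {s | ∃ K : Finset P, (↑K : Set P) ⊆ A ∧ K.Nonempty ∧
    s ≤ x ∧ (∀ a ∈ K, a ≤ s) ∧ ∀ t, t ≤ x → (∀ a ∈ K, a ≤ t) → s ≤ t} with hDdef
  have hmemD : ∀ a ∈ A, a ∈ D := by
    intro a ha
    refine ⟨{a}, by simpa using ha, ⟨a, by simp⟩, hA a ha, by simp, ?_⟩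
    intro t _ hbd
    exact hbd a (by simp)
  have hDne : D.Nonempty := ⟨hAne.choose, hmemD _ hAne.choose_spec⟩
  have hDdir : DirectedOn (· ≤ ·) D := by
    rintro s1 ⟨K1, hK1A, hK1ne, hs1x, hs1b, hs1l⟩ s2 ⟨K2, hK2A, hK2ne, hs2x, hs2b, hs2l⟩
    obtain ⟨s, hsx, hsb, hsl⟩ := hfin (K1 ∪ K2)
      (by intro y hy
          rcases Finset.mem_union.1 (Finset.mem_coe.1 hy) with h | h
          exacts [hK1A (Finset.mem_coe.2 h), hK2A (Finset.mem_coe.2 h)])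
      (hK1ne.mono Finset.subset_union_left)
    refine ⟨s, ⟨K1 ∪ K2, ?_, hK1ne.mono Finset.subset_union_left, hsx, hsb, hsl⟩, ?_, ?_⟩
    · intro y hy
      rcases Finset.mem_union.1 (Finset.mem_coe.1 hy) with h | h
      exacts [hK1A (Finset.mem_coe.2 h), hK2A (Finset.mem_coe.2 h)]
    · exact hs1l s hsx fun a ha => hsb a (Finset.mem_union_left _ ha)
    · exact hs2l s hsx fun a ha => hsb a (Finset.mem_union_right _ ha)
  obtain ⟨σ, hσ⟩ := hd D hDne hDdir
  refine ⟨σ, ?_, ?_, ?_⟩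
  · exact hσ.2 fun s hs => hs.choose_spec.2.2.1
  · intro a ha
    exact hσ.1 (hmemD a ha)
  · intro t ht hbd
    refine hσ.2 ?_
    rintro s ⟨K, hKA, hKne, hsx, hsb, hsl⟩
    exact hsl t ht fun a ha => hbd a (hKA (Finset.mem_coe.2 ha))

end LPart

/-- if `(U, R, 𝓕)` is an L-approximation space, then
`(𝔠(U, R, 𝓕), ⊆)` is an L-domain. -/
theorem stmt12 {U : Type*} (R : U → U → Prop) (𝓕 : Set (Set U))
    (hL : IsLApprox R 𝓕) :
    IsLDomain {E : Set U // CFClosed R 𝓕 E} := by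
  refine ⟨cf_continuous hL.1, ?_⟩
  apply local_complete (cf_dcpo hL.1)
  · intro x
    obtain ⟨m, hm1, hm2, hm3⟩ := local_bot hL x.2
    exact ⟨⟨m, hm1⟩, hm2, fun t ht => hm3 t.val t.2 ht⟩
  · intro x a b hax hbx
    obtain ⟨s, hs1, hs2, hs3, hs4, hs5⟩ := local_sup hL x.2 a.2 b.2 hax hbx
    exact ⟨⟨s, hs1⟩, hs2, hs3, hs4, fun t ht h1 h2 => hs5 t.val t.2 ht h1 h2⟩
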